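/- Let 0 < α < 1. For each n ∈ ℕ, the function g_{n+1}(x) = 1 + ∑_{k=2}^∞ (-1)^{k-1} α^{(k-1)(k-2-2n)/2} / ((1-α)⋯(1-α^{k-1})) · x^{(1-α^{k-1})/((1-α)α^{k-1})} converges absolutely for x ∈ [0,1], defines a continuous function on [0,1], and satisfies (V_α^* g_{n+1})(x) = (1-α)α^n g_{n+1}(x), where (V_α^* g)(x) = ∫_{x^{1/α}}^1 g(t)dt. -/

import Mathlib

open MeasureTheory

set_option maxHeartbeats 1000000

open Filter

namespace Stmt9

noncomputable def P (α : ℝ) (k : ℕ) : ℝ := ∏ i ∈ Finset.Icc 1 k, (1 - α ^ i)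

noncomputable def a (α : ℝ) (m : ℤ) (k : ℕ) : ℝ :=
  (-1 : ℝ) ^ k * α ^ ((k : ℤ) * ((k : ℤ) - 1) / 2 - m * k) / P α k

lemma P_zero (α : ℝ) : P α 0 = 1 := by simp [P]

lemma P_succ (α : ℝ) (k : ℕ) : P α (k + 1) = P α k * (1 - α ^ (k + 1)) := by
  simp [P, Finset.prod_Icc_succ_top (Nat.le_add_left 1 k)]

lemma P_pos {α : ℝ} (hα0 : 0 < α) (hα1 : α < 1) (k : ℕ) : 0 < P α k := by
  apply Finset.prod_pos
  intro i hi
  simp only [Finset.mem_Icc] at hi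
  have : α ^ i < 1 := pow_lt_one₀ hα0.le hα1 (by omega)
  linarith

lemma a_zero (α : ℝ) (m : ℤ) : a α m 0 = 1 := by simp [a, P_zero]

lemma half_succ (k : ℤ) : (k + 1) * k / 2 = k * (k - 1) / 2 + k := by
  obtain ⟨r, hr⟩ := Int.even_mul_succ_self (k - 1)
  have h1 : k * (k - 1) = 2 * r := by linear_combination hr
  have h2 : (k + 1) * k = 2 * (r + k) := by linear_combination hr
  rw [h1, h2, Int.mul_ediv_cancel_left _ two_ne_zero, Int.mul_ediv_cancel_left _ two_ne_zero]

lemma a_succ {α : ℝ} (hα0 : 0 < α) (hα1 : α < 1) (m : ℤ) (k : ℕ) :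
    a α m (k + 1) = a α m k * (-(α ^ ((k : ℤ) - m)) / (1 - α ^ (k + 1))) := by
  have hα := hα0.ne'
  have hP : P α k ≠ 0 := (P_pos hα0 hα1 k).ne'
  have hD : 1 - α ^ (k + 1) ≠ 0 := by
    have : α ^ (k+1) < 1 := pow_lt_one₀ hα0.le hα1 (Nat.succ_ne_zero k)
    linarith
  have hexp : ((k : ℤ) + 1) * (((k : ℤ) + 1) - 1) / 2 - m * ((k : ℤ) + 1)
      = ((k : ℤ) * ((k : ℤ) - 1) / 2 - m * k) + ((k : ℤ) - m) := by
    have h := half_succ (k : ℤ)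
    have : ((k : ℤ) + 1) * (((k : ℤ) + 1) - 1) = ((k : ℤ) + 1) * k := by ring
    rw [this, h]; ring
  simp only [a, P_succ, Nat.cast_add, Nat.cast_one]
  rw [hexp, zpow_add₀ hα]
  have hz : α ^ ((k:ℤ) - m) ≠ 0 := (zpow_pos hα0 _).ne'
  field_simp
  ring

lemma summable_abs_a {α : ℝ} (hα0 : 0 < α) (hα1 : α < 1) (m : ℤ) :
    Summable fun k => |a α m k| := by
  have hα := hα0.ne'
  have h1α : (0 : ℝ) < 1 - α := by linarith
  apply summable_of_ratio_norm_eventually_le (r := 1/2) (by norm_num)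
  have htend : Tendsto (fun k : ℕ => α ^ ((k : ℤ) - m)) atTop (nhds 0) := by
    have : (fun k : ℕ => α ^ ((k : ℤ) - m)) = fun k : ℕ => α ^ (-m) * α ^ k := by
      funext k
      rw [sub_eq_add_neg, add_comm, zpow_add₀ hα, zpow_natCast]
    rw [this]
    simpa using (tendsto_pow_atTop_nhds_zero_of_lt_one hα0.le hα1).const_mul (α ^ (-m))
  filter_upwards [htend.eventually_lt_const (show (0:ℝ) < (1 - α)/2 by linarith)] with k hk
  have hz : (0:ℝ) < α ^ ((k : ℤ) - m) := zpow_pos hα0 _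
  have hp1 : α ^ (k + 1) < 1 := pow_lt_one₀ hα0.le hα1 (Nat.succ_ne_zero k)
  have hp0 : (0:ℝ) < 1 - α ^ (k + 1) := by linarith
  have hαk : α ^ (k+1) ≤ α := by
    calc α ^ (k+1) ≤ α ^ 1 := pow_le_pow_of_le_one hα0.le hα1.le (by omega)
    _ = α := pow_one α
  have hge : (1 - α) ≤ 1 - α ^ (k + 1) := by linarith
  rw [a_succ hα0 hα1 m k, Real.norm_eq_abs, Real.norm_eq_abs, abs_abs, abs_abs, abs_mul,
    abs_div, abs_neg, abs_of_pos hz, abs_of_pos hp0, mul_comm ((1:ℝ)/2) _]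
  apply mul_le_mul_of_nonneg_left _ (abs_nonneg _)
  rw [div_le_iff₀ hp0]
  calc α ^ ((k : ℤ) - m) ≤ (1 - α)/2 := hk.le
  _ ≤ 1/2 * (1 - α ^ (k+1)) := by linarith

noncomputable def F (α : ℝ) (m : ℤ) : ℝ := ∑' k, a α m k

lemma F_eq {α : ℝ} (hα0 : 0 < α) (hα1 : α < 1) (m : ℤ) :
    F α m = (1 - α ^ (-m)) * F α (m - 1) := by
  have hα := hα0.ne'
  have hs : ∀ m' : ℤ, Summable (a α m') := fun m' => (summable_abs_a hα0 hα1 m').of_abs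
  have hD : ∀ k : ℕ, (1:ℝ) - α ^ (k + 1) ≠ 0 := by
    intro k
    have : α ^ (k+1) < 1 := pow_lt_one₀ hα0.le hα1 (Nat.succ_ne_zero k)
    linarith
  have key : ∀ k : ℕ, a α m (k + 1) - a α (m - 1) (k + 1) = -α ^ (-m) * a α (m - 1) k := by
    intro k
    rw [a_succ hα0 hα1 m k, a_succ hα0 hα1 (m - 1) k]
    have he1 : ((k : ℤ) - (m - 1)) = ((k : ℤ) - m) + 1 := by ring
    rw [he1, zpow_add₀ hα, zpow_one]
    have h2 : α ^ ((k:ℤ) - m) = α ^ (-m) * α ^ k := by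
      rw [← zpow_natCast α k, ← zpow_add₀ hα]
      congr 1
      ring
    have h3 : a α (m - 1) k = a α m k * α ^ k := by
      simp only [a]
      conv_rhs => rw [← zpow_natCast α k]
      rw [div_mul_eq_mul_div, mul_assoc, ← zpow_add₀ hα]
      have : (k : ℤ) * ((k : ℤ) - 1) / 2 - (m - 1) * k
          = ((k : ℤ) * ((k : ℤ) - 1) / 2 - m * k) + k := by ring
      rw [this]
    rw [h3, h2]
    field_simp [hD k]
    ring
  have hd0 : a α m 0 - a α (m - 1) 0 = 0 := by rw [a_zero, a_zero]; ring
  have hsub : Summable fun k => a α m k - a α (m - 1) k := (hs m).sub (hs (m - 1))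
  have h1 : F α m - F α (m - 1) = ∑' k, (a α m k - a α (m - 1) k) :=
    (Summable.tsum_sub (hs m) (hs (m - 1))).symm
  rw [Summable.tsum_eq_zero_add hsub, hd0] at h1
  simp only [key] at h1
  rw [tsum_mul_left] at h1
  have h2 : F α m - F α (m - 1) = -α ^ (-m) * F α (m - 1) := by
    rw [h1, zero_add]; rfl
  linarith [h2]

lemma F_nat {α : ℝ} (hα0 : 0 < α) (hα1 : α < 1) (n : ℕ) : F α (n : ℤ) = 0 := by
  induction n with
  | zero => rw [show ((0:ℕ):ℤ) = 0 by norm_num, F_eq hα0 hα1 0]; simp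
  | succ n ih =>
    have := F_eq hα0 hα1 ((n : ℤ) + 1)
    rw [show ((n:ℤ) + 1 - 1) = (n:ℤ) by ring, ih, mul_zero] at this
    rw [show (((n+1 : ℕ)):ℤ) = (n:ℤ) + 1 by push_cast; ring, this]


lemma exp_eq (n j : ℕ) : (((j:ℤ) + 1) * ((j:ℤ) - 2 * (n:ℤ))) / 2
    = ((j:ℤ) + 1) * (((j:ℤ) + 1) - 1) / 2 - (n:ℤ) * ((j:ℤ) + 1) := by
  obtain ⟨r, hr⟩ := Int.even_mul_succ_self (j : ℤ)
  have h1 : ((j:ℤ) + 1) * ((j:ℤ) - 2 * (n:ℤ)) = 2 * (r - (n:ℤ) * ((j:ℤ) + 1)) := by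
    linear_combination hr
  have h2 : ((j:ℤ) + 1) * (((j:ℤ) + 1) - 1) = 2 * r := by linear_combination hr
  rw [h1, h2, Int.mul_ediv_cancel_left _ two_ne_zero, Int.mul_ediv_cancel_left _ two_ne_zero]

end Stmt9

/-- For `0 < α < 1`, the series defining `g_{n+1}` converges absolutely on `[0,1]`, defines a
continuous function, and `g_{n+1}` is an eigenfunction of `(V_α^* g)(x) = ∫_{x^{1/α}}^1 g(t) dt`
with eigenvalue `(1-α)α^n`. -/
theorem stmt_9 (α : ℝ) (hα0 : 0 < α) (hα1 : α < 1) (n : ℕ)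
    (term : ℕ → ℝ → ℝ)
    (hterm : ∀ j : ℕ, ∀ x : ℝ, term j x =
      (-1 : ℝ) ^ (j + 1) * α ^ ((((j : ℤ) + 1) * ((j : ℤ) - 2 * (n : ℤ))) / 2 : ℤ) /
        (∏ i ∈ Finset.Icc 1 (j + 1), (1 - α ^ i)) *
        x ^ ((1 - α ^ (j + 1)) / ((1 - α) * α ^ (j + 1))))
    (g : ℝ → ℝ) (hg : ∀ x : ℝ, g x = 1 + ∑' j : ℕ, term j x) :
    (∀ x ∈ Set.Icc (0:ℝ) 1, Summable fun j : ℕ => |term j x|) ∧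
    ContinuousOn g (Set.Icc (0:ℝ) 1) ∧
    ∀ x ∈ Set.Icc (0:ℝ) 1, (∫ t in (x ^ (1/α))..(1:ℝ), g t) = (1 - α) * α ^ n * g x := by
  have hα : α ≠ 0 := hα0.ne'
  have h1α : (0:ℝ) < 1 - α := by linarith
  set lam : ℝ := (1 - α) * α ^ n with hlam
  set c : ℕ → ℝ := fun j => Stmt9.a α (n : ℤ) (j + 1) with hcdef
  set β : ℕ → ℝ := fun j => (1 - α ^ (j + 1)) / ((1 - α) * α ^ (j + 1)) with hβdef
  have hpowpos : ∀ k : ℕ, (0:ℝ) < α ^ k := fun k => pow_pos hα0 k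
  have hD : ∀ k : ℕ, (0:ℝ) < 1 - α ^ (k + 1) := by
    intro k
    have : α ^ (k + 1) < 1 := pow_lt_one₀ hα0.le hα1 (Nat.succ_ne_zero k)
    linarith
  have hβpos : ∀ j, 0 < β j := by
    intro j
    have h1 := hD j
    have h2 := hpowpos (j + 1)
    exact div_pos (by linarith) (by positivity)
  have hE : ∀ j : ℕ, ((((j:ℤ) + 1) * ((j:ℤ) - 2 * (n:ℤ))) / 2)
      = (((j+1 : ℕ) : ℤ) * (((j+1 : ℕ) : ℤ) - 1) / 2 - (n:ℤ) * ((j+1 : ℕ) : ℤ)) := by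
    intro j
    push_cast
    exact Stmt9.exp_eq n j
  have hterm' : ∀ j x, term j x = c j * x ^ β j := by
    intro j x
    rw [hterm j x, hE j]
    simp only [hcdef, hβdef, Stmt9.a, Stmt9.P]
  -- summability
  have hsa : Summable (Stmt9.a α (n:ℤ)) := (Stmt9.summable_abs_a hα0 hα1 n).of_abs
  have hsc_abs : Summable fun j => |c j| :=
    (summable_nat_add_iff 1).2 (Stmt9.summable_abs_a hα0 hα1 n)
  have hsc : Summable c := hsc_abs.of_abs
  have hbound : ∀ (j : ℕ) (x : ℝ), x ∈ Set.Icc (0:ℝ) 1 → |c j * x ^ β j| ≤ |c j| := by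
    intro j x hx
    rw [abs_mul]
    have h0 : 0 ≤ x ^ β j := Real.rpow_nonneg hx.1 _
    have h1 : x ^ β j ≤ 1 := Real.rpow_le_one hx.1 hx.2 (hβpos j).le
    rw [abs_of_nonneg h0]
    calc |c j| * x ^ β j ≤ |c j| * 1 := mul_le_mul_of_nonneg_left h1 (abs_nonneg _)
    _ = |c j| := mul_one _
  have part1 : ∀ x ∈ Set.Icc (0:ℝ) 1, Summable fun j : ℕ => |term j x| := by
    intro x hx
    simp only [hterm']
    exact Summable.of_nonneg_of_le (fun j => abs_nonneg _)
      (fun j => hbound j x hx) hsc_abs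
  -- continuity
  have hrpc : ∀ j, Continuous fun t : ℝ => t ^ β j := by
    intro j
    exact continuous_iff_continuousAt.2 fun t =>
      Real.continuousAt_rpow_const t (β j) (Or.inr (hβpos j).le)
  have hScont : ContinuousOn (fun t : ℝ => ∑' j, c j * t ^ β j) (Set.Icc (0:ℝ) 1) := by
    apply continuousOn_tsum (fun j => (continuous_const.mul (hrpc j)).continuousOn) hsc_abs
    intro j x hx
    rw [Real.norm_eq_abs]
    exact hbound j x hx
  have hgeq : g = fun x => 1 + ∑' j, c j * x ^ β j := by
    funext x
    rw [hg x]
    congr 1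
    exact tsum_congr fun j => hterm' j x
  have part2 : ContinuousOn g (Set.Icc (0:ℝ) 1) := by
    rw [hgeq]
    exact continuousOn_const.add hScont
  refine ⟨part1, part2, ?_⟩
  intro x hx
  obtain ⟨hx0, hx1⟩ := hx
  set y := x ^ (1/α) with hy
  have hy0 : 0 ≤ y := Real.rpow_nonneg hx0 _
  have hy1 : y ≤ 1 := Real.rpow_le_one hx0 hx1 (by positivity)
  -- beta identities
  have hβ0 : β 0 = 1/α := by
    simp only [hβdef, pow_one]
    field_simp
    ring
  have hβsucc : ∀ j : ℕ, (1/α) * (β j + 1) = β (j + 1) := by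
    intro j
    simp only [hβdef]
    have hp1 : (α:ℝ) ^ (j+1) ≠ 0 := (hpowpos _).ne'
    have hp2 : (α:ℝ) ^ (j+2) ≠ 0 := (hpowpos _).ne'
    field_simp
    ring
  have hxpow : ∀ j : ℕ, y ^ (β j + 1) = x ^ β (j + 1) := by
    intro j
    rw [hy, ← Real.rpow_mul hx0, hβsucc j]
  -- coefficient identities
  have hcsucc : ∀ j : ℕ, c (j+1) = c j * (-(α ^ (((j:ℤ) + 1) - (n:ℤ))) / (1 - α ^ (j+2))) := by
    intro j
    have h := Stmt9.a_succ hα0 hα1 (n:ℤ) (j+1)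
    simp only [hcdef]
    rw [h]
    norm_num
  have hAj : ∀ j : ℕ, c j / (β j + 1) = -(lam * c (j+1)) := by
    intro j
    rw [hcsucc j]
    have hβ1 : β j + 1 = (1 - α ^ (j+2)) / ((1 - α) * α ^ (j+1)) := by
      simp only [hβdef]
      have hp1 : (α:ℝ) ^ (j+1) ≠ 0 := (hpowpos _).ne'
      field_simp
      ring
    rw [hβ1, hlam]
    have h2 : (0:ℝ) < 1 - α ^ (j+2) := hD (j+1)
    have hz : α ^ (((j:ℤ) + 1) - (n:ℤ)) = α ^ (j+1) / α ^ n := by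
      rw [eq_div_iff (pow_ne_zero n hα), ← zpow_natCast α n, ← zpow_natCast α (j+1),
        ← zpow_add₀ hα]
      congr 1
      push_cast
      ring
    rw [hz]
    have hp1 : (α:ℝ) ^ (j+1) ≠ 0 := (hpowpos _).ne'
    have hpn : (α:ℝ) ^ n ≠ 0 := (hpowpos _).ne'
    field_simp
  have hc0 : c 0 = -(α ^ (-(n:ℤ))) / (1 - α) := by
    simp only [hcdef]
    show Stmt9.a α (n:ℤ) 1 = _
    rw [Stmt9.a]
    norm_num [Stmt9.P]
  have hc0lam : lam * c 0 = -1 := by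
    rw [hc0, hlam]
    have hzz : α ^ (n:ℕ) * α ^ (-(n:ℤ)) = 1 := by
      rw [← zpow_natCast α n, ← zpow_add₀ hα]
      simp
    have hzp : (0:ℝ) < α ^ (-(n:ℤ)) := zpow_pos hα0 _
    field_simp
    linarith [hzz]
  -- tsum values
  have hsumc : ∑' j, c j = -1 := by
    have h := Stmt9.F_nat hα0 hα1 n
    rw [Stmt9.F, Summable.tsum_eq_zero_add hsa, Stmt9.a_zero] at h
    simp only [hcdef]
    linarith
  have hsc1 : Summable fun j => c (j+1) := (summable_nat_add_iff 1).2 hsc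
  have hshift : ∑' j, c (j+1) = -1 - c 0 := by
    have h := Summable.tsum_eq_zero_add hsc
    rw [hsumc] at h
    linarith
  have hscx : Summable fun j => c j * x ^ β j :=
    (Summable.of_nonneg_of_le (fun j => abs_nonneg _)
      (fun j => hbound j x ⟨hx0, hx1⟩) hsc_abs).of_abs
  have hscx1 : Summable fun j => c (j+1) * x ^ β (j+1) := (summable_nat_add_iff 1).2 hscx
  -- integrability and term-by-term integration
  have hIS : IntervalIntegrable (fun t : ℝ => ∑' j, c j * t ^ β j) volume y 1 := by
    apply ContinuousOn.intervalIntegrable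
    rw [Set.uIcc_of_le hy1]
    exact hScont.mono (Set.Icc_subset_Icc hy0 le_rfl)
  have hnn : Summable fun j => ‖c j‖₊ := by
    rw [← NNReal.summable_coe]
    simpa [Real.norm_eq_abs] using hsc_abs
  have hfin : ∑' j, ∫⁻ t in Set.Ioc y 1, ‖c j * t ^ β j‖₊ ∂volume ≠ ⊤ := by
    have hble : ∀ j : ℕ, (∫⁻ t in Set.Ioc y 1, ‖c j * t ^ β j‖₊ ∂volume) ≤ (‖c j‖₊ : ENNReal) := by
      intro j
      calc ∫⁻ t in Set.Ioc y 1, (‖c j * t ^ β j‖₊ : ENNReal) ∂volume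
          ≤ ∫⁻ _ in Set.Ioc y 1, (‖c j‖₊ : ENNReal) ∂volume := by
            apply MeasureTheory.setLIntegral_mono measurable_const
            intro t ht
            rw [ENNReal.coe_le_coe, ← NNReal.coe_le_coe, coe_nnnorm, coe_nnnorm,
              Real.norm_eq_abs, Real.norm_eq_abs]
            exact hbound j t ⟨le_trans hy0 ht.1.le, ht.2⟩
        _ = ‖c j‖₊ * volume (Set.Ioc y 1) := MeasureTheory.setLIntegral_const _ _
        _ ≤ ‖c j‖₊ * 1 := by
            apply mul_le_mul_right
            rw [Real.volume_Ioc]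
            exact ENNReal.ofReal_le_one.2 (by linarith)
        _ = ‖c j‖₊ := mul_one _
    exact ne_top_of_le_ne_top (ENNReal.tsum_coe_ne_top_iff_summable.2 hnn)
      (ENNReal.tsum_le_tsum hble)
  have hint : (∫ t in y..(1:ℝ), g t) = (1 - y) + ∑' j, ∫ t in y..(1:ℝ), c j * t ^ β j := by
    simp only [hgeq]
    rw [intervalIntegral.integral_add intervalIntegrable_const hIS]
    congr 1
    · simp
    · rw [intervalIntegral.integral_of_le hy1,
        MeasureTheory.integral_tsum (f := fun j t => c j * t ^ β j)
          (fun j => (continuous_const.mul (hrpc j)).aestronglyMeasurable) hfin]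
      exact tsum_congr fun j => (intervalIntegral.integral_of_le hy1).symm
  have hvalj : ∀ j : ℕ, (∫ t in y..(1:ℝ), c j * t ^ β j)
      = lam * (c (j+1) * x ^ β (j+1)) - lam * c (j+1) := by
    intro j
    rw [intervalIntegral.integral_const_mul,
      integral_rpow (Or.inl (by linarith [hβpos j] : (-1:ℝ) < β j)),
      Real.one_rpow, hxpow j]
    have h := hAj j
    have h1 : c j * ((1 - x ^ β (j+1)) / (β j + 1))
        = (c j / (β j + 1)) * (1 - x ^ β (j+1)) := by ring
    rw [h1, h]
    ring
  have hgx : g x = 1 + (c 0 * x ^ β 0 + ∑' j, c (j+1) * x ^ β (j+1)) := by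
    rw [hgeq]
    simp only
    rw [Summable.tsum_eq_zero_add hscx]
  have hxβ0 : x ^ β 0 = y := by rw [hβ0, hy]
  calc (∫ t in y..(1:ℝ), g t)
      = (1 - y) + ∑' j, (lam * (c (j+1) * x ^ β (j+1)) - lam * c (j+1)) := by
        rw [hint]
        exact congrArg _ (tsum_congr hvalj)
    _ = (1 - y) + (lam * ∑' j, c (j+1) * x ^ β (j+1) - lam * ∑' j, c (j+1)) := by
        rw [Summable.tsum_sub (hscx1.mul_left lam) (hsc1.mul_left lam), tsum_mul_left, tsum_mul_left]
    _ = lam * g x := by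
        rw [hshift, hgx, hxβ0]
        linear_combination (1 - y) * hc0lam
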